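/- arXiv:1804.06187 — 2 statements merged into one kernel-verified Lean document; each statement's English description precedes it below -/
import Mathlib

section
/- If P(H) > 0, P(K) > 0, P(A∩H) > 0, and A|H logically implies B|K in the sense of Goodman–Nguyen (A|H ⊑ B|K), then the iterated conditional satisfies ⟦(B|K)|(A|H)⟧(ω) = 1 for every ω ∈ Ω; in particular its prevision μ equals 1. -/
open MeasureTheory Set
open scoped Classical

noncomputable section

variable {Ω : Type*} [MeasurableSpace Ω]

/-- Indicator (with values in `ℝ`) of a set. -/
def ind (A : Set Ω) : Ω → ℝ := A.indicator 1

/-- Conditional probability `P(A|H) = P(A ∩ H)/P(H)`. -/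
def condProb (P : Measure Ω) (A H : Set Ω) : ℝ :=
  (P (A ∩ H)).toReal / (P H).toReal

/-- The (indicator of the) conditional event `A|H`,
`⟦A|H⟧ = 1_{A∩H} + P(A|H)·1_{Hᶜ}`. -/
def condEvent (P : Measure Ω) (A H : Set Ω) : Ω → ℝ :=
  fun ω => ind (A ∩ H) ω + condProb P A H * ind Hᶜ ω

/-- The prevision `z` of the conjunction `(A|H) ∧ (B|K)`:
`z = E[min(⟦A|H⟧, ⟦B|K⟧)·1_{H∪K}]/P(H∪K)`. -/
def conjPrev (P : Measure Ω) (A H B K : Set Ω) : ℝ :=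
  (∫ ω, min (condEvent P A H ω) (condEvent P B K ω) * ind (H ∪ K) ω ∂P) /
    (P (H ∪ K)).toReal

/-- The conjunction `⟦(A|H) ∧ (B|K)⟧ = min(⟦A|H⟧, ⟦B|K⟧)·1_{H∪K} + z·1_{(H∪K)ᶜ}`. -/
def conjCE (P : Measure Ω) (A H B K : Set Ω) : Ω → ℝ :=
  fun ω => min (condEvent P A H ω) (condEvent P B K ω) * ind (H ∪ K) ω
    + conjPrev P A H B K * ind (H ∪ K)ᶜ ω

/-- The iterated conditional `⟦(B|K)|(A|H)⟧ = ⟦(A|H)∧(B|K)⟧ + μ·(1 − ⟦A|H⟧)`,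
with `μ = z / P(A|H)`. -/
def iterCond (P : Measure Ω) (A H B K : Set Ω) : Ω → ℝ :=
  fun ω => conjCE P A H B K ω +
    (conjPrev P A H B K / condProb P A H) * (1 - condEvent P A H ω)

/-- Goodman–Nguyen logical implication between conditional events:
`A|H ⊑ B|K` iff `A∩H ⊆ B∩K` and `Bᶜ∩K ⊆ Aᶜ∩H`. -/
def GNle (A H B K : Set Ω) : Prop := A ∩ H ⊆ B ∩ K ∧ Bᶜ ∩ K ⊆ Aᶜ ∩ H

lemma ind_apply (S : Set Ω) (ω : Ω) : ind S ω = if ω ∈ S then 1 else 0 := by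
  simp [ind, Set.indicator_apply]

lemma integrable_ind (P : Measure Ω) [IsProbabilityMeasure P] {S : Set Ω}
    (hS : MeasurableSet S) : Integrable (ind S) P :=
  (integrable_const (1 : ℝ)).indicator hS

/-- If `P(A∩H) > 0` and `A|H ⊑ B|K` (Goodman–Nguyen), then the iterated
conditional `⟦(B|K)|(A|H)⟧` is constantly `1`; in particular its prevision
`μ = z/P(A|H)` equals `1`. -/
theorem iterCond_eq_one_of_GNle (P : Measure Ω) [IsProbabilityMeasure P]
    (A H B K : Set Ω)
    (hAm : MeasurableSet A) (hHm : MeasurableSet H)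
    (hBm : MeasurableSet B) (hKm : MeasurableSet K)
    (hH : 0 < P H) (hK : 0 < P K) (hAH : 0 < P (A ∩ H))
    (hGN : GNle A H B K) :
    (∀ ω, iterCond P A H B K ω = 1) ∧
      conjPrev P A H B K / condProb P A H = 1 := by
  obtain ⟨h1, h2⟩ := hGN
  set a := condProb P A H with ha_def
  set b := condProb P B K with hb_def
  have pH_pos : 0 < (P H).toReal := ENNReal.toReal_pos hH.ne' (measure_ne_top P H)
  have pK_pos : 0 < (P K).toReal := ENNReal.toReal_pos hK.ne' (measure_ne_top P K)
  have pAH_pos : 0 < (P (A ∩ H)).toReal :=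
    ENNReal.toReal_pos hAH.ne' (measure_ne_top P _)
  have a_pos : 0 < a := div_pos pAH_pos pH_pos
  have a_le_one : a ≤ 1 := by
    rw [ha_def, condProb, div_le_one pH_pos]
    exact ENNReal.toReal_le_toReal (measure_ne_top P _) (measure_ne_top P _) |>.mpr
      (measure_mono inter_subset_right)
  have b_nonneg : 0 ≤ b := div_nonneg ENNReal.toReal_nonneg pK_pos.le
  -- splitting of H and K
  have hHsplit : (P H).toReal = (P (A ∩ H)).toReal + (P (Aᶜ ∩ H)).toReal := by
    have := measure_inter_add_diff (μ := P) H hAm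
    rw [inter_comm H A, diff_eq, inter_comm H Aᶜ] at this
    rw [← this, ENNReal.toReal_add (measure_ne_top P _) (measure_ne_top P _)]
  have hKsplit : (P K).toReal = (P (B ∩ K)).toReal + (P (Bᶜ ∩ K)).toReal := by
    have := measure_inter_add_diff (μ := P) K hBm
    rw [inter_comm K B, diff_eq, inter_comm K Bᶜ] at this
    rw [← this, ENNReal.toReal_add (measure_ne_top P _) (measure_ne_top P _)]
  have hm1 : (P (A ∩ H)).toReal ≤ (P (B ∩ K)).toReal :=
    ENNReal.toReal_le_toReal (measure_ne_top P _) (measure_ne_top P _) |>.mpr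
      (measure_mono h1)
  have hm2 : (P (Bᶜ ∩ K)).toReal ≤ (P (Aᶜ ∩ H)).toReal :=
    ENNReal.toReal_le_toReal (measure_ne_top P _) (measure_ne_top P _) |>.mpr
      (measure_mono h2)
  have hab : a ≤ b := by
    rw [ha_def, hb_def, condProb, condProb, div_le_div_iff₀ pH_pos pK_pos]
    nlinarith [ENNReal.toReal_nonneg (a := P (A ∩ H)),
      ENNReal.toReal_nonneg (a := P (Bᶜ ∩ K)),
      ENNReal.toReal_nonneg (a := P (B ∩ K)),
      ENNReal.toReal_nonneg (a := P (Aᶜ ∩ H)),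
      mul_le_mul hm1 hm2 ENNReal.toReal_nonneg
        (le_trans ENNReal.toReal_nonneg hm1)]
  -- pointwise: the min is condEvent A|H
  have hmin : ∀ ω, min (condEvent P A H ω) (condEvent P B K ω) = condEvent P A H ω := by
    intro ω
    rw [min_eq_left]
    unfold condEvent
    rw [← ha_def, ← hb_def]
    by_cases hωH : ω ∈ H
    · by_cases hωA : ω ∈ A
      · have hBK : ω ∈ B ∩ K := h1 ⟨hωA, hωH⟩
        simp [ind_apply, hωH, hωA, hBK.1, hBK.2]
      · have hAH' : ω ∉ A ∩ H := fun h => hωA h.1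
        have hHc : ω ∉ Hᶜ := fun h => h hωH
        rw [ind_apply (A ∩ H), ind_apply Hᶜ, if_neg hAH', if_neg hHc]
        have h3 : (0:ℝ) ≤ ind (B ∩ K) ω := by rw [ind_apply]; split_ifs <;> norm_num
        have h4 : (0:ℝ) ≤ ind Kᶜ ω := by rw [ind_apply]; split_ifs <;> norm_num
        nlinarith [mul_nonneg b_nonneg h4]
    · have hAH' : ω ∉ A ∩ H := fun h => hωH h.2
      by_cases hωK : ω ∈ K
      · have hωB : ω ∈ B := by
          by_contra hB
          exact hωH (h2 ⟨hB, hωK⟩).2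
        simp [ind_apply, hωH, hAH', hωB, hωK]
        linarith
      · simp [ind_apply, hωH, hAH', hωK, fun h : ω ∈ B ∩ K => hωK h.2]
        linarith
  -- the integral
  have hrw : ∀ ω, min (condEvent P A H ω) (condEvent P B K ω) * ind (H ∪ K) ω
      = ind (A ∩ H) ω + a * ind (K \ H) ω := by
    intro ω
    rw [hmin ω]
    unfold condEvent
    rw [← ha_def]
    by_cases hωH : ω ∈ H
    · simp [ind_apply, hωH, mem_union, mem_diff, mem_compl_iff]
    · by_cases hωK : ω ∈ K
      · simp [ind_apply, hωH, hωK, fun h : ω ∈ A ∩ H => hωH h.2, mem_union]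
      · simp [ind_apply, hωH, hωK, fun h : ω ∈ A ∩ H => hωH h.2, mem_union]
  have hint : (∫ ω, min (condEvent P A H ω) (condEvent P B K ω) * ind (H ∪ K) ω ∂P)
      = (P (A ∩ H)).toReal + a * (P (K \ H)).toReal := by
    rw [integral_congr_ae (Filter.Eventually.of_forall hrw)]
    rw [integral_add (integrable_ind P (hAm.inter hHm))
      ((integrable_ind P (hKm.diff hHm)).const_mul a)]
    rw [integral_const_mul]
    rw [show ind (A ∩ H) = (A ∩ H).indicator 1 from rfl,
      show ind (K \ H) = (K \ H).indicator 1 from rfl]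
    rw [integral_indicator_one (hAm.inter hHm), integral_indicator_one (hKm.diff hHm)]
    rfl
  have hHK : (P (H ∪ K)).toReal = (P H).toReal + (P (K \ H)).toReal := by
    have hd : Disjoint H (K \ H) := disjoint_sdiff_right
    have : P (H ∪ (K \ H)) = P H + P (K \ H) := measure_union hd (hKm.diff hHm)
    rw [Set.union_diff_self] at this
    rw [this, ENNReal.toReal_add (measure_ne_top P _) (measure_ne_top P _)]
  have pKH_nonneg : 0 ≤ (P (K \ H)).toReal := ENNReal.toReal_nonneg
  have pHK_pos : 0 < (P (H ∪ K)).toReal := by rw [hHK]; linarith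
  have hPAHa : (P (A ∩ H)).toReal = a * (P H).toReal := by
    rw [ha_def, condProb]; field_simp
  have hz : conjPrev P A H B K = a := by
    unfold conjPrev
    rw [hint, hHK, hPAHa]
    rw [show a * (P H).toReal + a * (P (K \ H)).toReal
        = a * ((P H).toReal + (P (K \ H)).toReal) by ring]
    exact mul_div_cancel_right₀ a (by linarith)
  have hmu : conjPrev P A H B K / condProb P A H = 1 := by
    rw [hz, ← ha_def, div_self a_pos.ne']
  refine ⟨fun ω => ?_, hmu⟩
  unfold iterCond conjCE
  rw [hmin ω, hmu, hz]
  by_cases hωHK : ω ∈ H ∪ K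
  · have e1 : ind (H ∪ K) ω = 1 := by rw [ind_apply, if_pos hωHK]
    have e2 : ind (H ∪ K)ᶜ ω = 0 := by rw [ind_apply, if_neg (fun h => h hωHK)]
    rw [e1, e2]; ring
  · have hωH : ω ∉ H := fun h => hωHK (Or.inl h)
    have hcA : condEvent P A H ω = a := by
      unfold condEvent
      rw [← ha_def]
      simp [ind_apply, hωH, fun h : ω ∈ A ∩ H => hωH h.2]
    have e1 : ind (H ∪ K) ω = 0 := by rw [ind_apply, if_neg hωHK]
    have e2 : ind (H ∪ K)ᶜ ω = 1 := by rw [ind_apply, if_pos (show ω ∈ (H ∪ K)ᶜ from hωHK)]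
    rw [hcA, e1, e2]; ring

end
end

section
/- Cut rule: for events A, B, C with P(A∩B) > 0, the conjunction satisfies ⟦(C|(A∩B))∧(B|A)⟧(ω) = ⟦(B∩C)|A⟧(ω) for every ω ∈ Ω; moreover, if P(A∩B∩C) > 0, then the iterated conditional satisfies ⟦(C|A)|((B∩C)|A)⟧(ω) = 1 for every ω ∈ Ω. -/
open MeasureTheory Set
open scoped Classical

noncomputable section

variable {Ω : Type*} [MeasurableSpace Ω]

lemma condProb_nonneg (P : Measure Ω) (A H : Set Ω) : 0 ≤ condProb P A H :=
  div_nonneg ENNReal.toReal_nonneg ENNReal.toReal_nonneg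

lemma key1 (P : Measure Ω) (A B C : Set Ω) (ω : Ω) :
    min (condEvent P C (A ∩ B) ω) (condEvent P B A ω) * ind ((A ∩ B) ∪ A) ω
      = ind (A ∩ B ∩ C) ω := by
  by_cases hA : ω ∈ A
  · by_cases hB : ω ∈ B
    · by_cases hC : ω ∈ C
      · simp [condEvent, ind, Set.indicator_apply, hA, hB, hC]
      · simp [condEvent, ind, Set.indicator_apply, hA, hB, hC]
    · simp [condEvent, ind, Set.indicator_apply, hA, hB,
        min_eq_right (condProb_nonneg P C (A ∩ B))]
  · simp [condEvent, ind, Set.indicator_apply, hA]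

lemma key2 (P : Measure Ω) (A B C : Set Ω) (ω : Ω) :
    min (condEvent P (B ∩ C) A ω) (condEvent P C A ω) * ind (A ∪ A) ω
      = ind (A ∩ B ∩ C) ω := by
  by_cases hA : ω ∈ A
  · by_cases hB : ω ∈ B
    · by_cases hC : ω ∈ C
      · simp [condEvent, ind, Set.indicator_apply, hA, hB, hC]
      · simp [condEvent, ind, Set.indicator_apply, hA, hB, hC]
    · by_cases hC : ω ∈ C
      · simp [condEvent, ind, Set.indicator_apply, hA, hB, hC]
      · simp [condEvent, ind, Set.indicator_apply, hA, hB, hC]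
  · simp [condEvent, ind, Set.indicator_apply, hA]

/-- Cut rule: `⟦(C|(A∩B))∧(B|A)⟧ = ⟦(B∩C)|A⟧` pointwise; moreover, if
`P(A∩B∩C) > 0`, then `⟦(C|A)|((B∩C)|A)⟧` is constantly `1`. -/
theorem cut_rule (P : Measure Ω) [IsProbabilityMeasure P]
    (A B C : Set Ω)
    (hAm : MeasurableSet A) (hBm : MeasurableSet B) (hCm : MeasurableSet C)
    (hAB : 0 < P (A ∩ B)) :
    (∀ ω, conjCE P C (A ∩ B) B A ω = condEvent P (B ∩ C) A ω) ∧
      (0 < P (A ∩ B ∩ C) → ∀ ω, iterCond P (B ∩ C) A C A ω = 1) := by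
  have hU1 : (A ∩ B) ∪ A = A := by ext ω; simp; tauto
  have hU2 : A ∪ A = A := union_self A
  have hSet : (B ∩ C) ∩ A = A ∩ B ∩ C := by ext ω; simp; tauto
  have hmeas : MeasurableSet (A ∩ B ∩ C) := (hAm.inter hBm).inter hCm
  have hint : ∫ ω, ind (A ∩ B ∩ C) ω ∂P = (P (A ∩ B ∩ C)).toReal := by
    simpa [ind, measureReal_def] using integral_indicator_one (μ := P) hmeas
  have hz1 : conjPrev P C (A ∩ B) B A = condProb P (B ∩ C) A := by
    unfold conjPrev condProb
    rw [integral_congr_ae (Filter.Eventually.of_forall (key1 P A B C)), hint,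
      hU1, hSet]
  have hz2 : conjPrev P (B ∩ C) A C A = condProb P (B ∩ C) A := by
    unfold conjPrev condProb
    rw [integral_congr_ae (Filter.Eventually.of_forall (key2 P A B C)), hint,
      hU2, hSet]
  constructor
  · intro ω
    have h := key1 P A B C ω
    by_cases hA : ω ∈ A
    · have : ind ((A ∩ B) ∪ A)ᶜ ω = 0 := by
        simp [ind, Set.indicator_apply, hA]
      rw [conjCE] at *
      rw [h, this, mul_zero, add_zero, condEvent]
      have : ind Aᶜ ω = 0 := by simp [ind, Set.indicator_apply, hA]
      rw [this, mul_zero, add_zero, hSet]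
    · have h1 : ind ((A ∩ B) ∪ A)ᶜ ω = 1 := by
        simp [ind, Set.indicator_apply, hA]
      have h2 : ind Aᶜ ω = 1 := by simp [ind, Set.indicator_apply, hA]
      have h3 : ind (A ∩ B ∩ C) ω = 0 := by
        simp [ind, Set.indicator_apply, hA]
      have h4 : ind ((B ∩ C) ∩ A) ω = 0 := by
        simp [ind, Set.indicator_apply, hA]
      rw [conjCE, h, h3, h1, hz1, condEvent, h4, h2]
  · intro hABC ω
    have hPA : 0 < P A := lt_of_lt_of_le hABC (measure_mono (by intro x hx; exact hx.1.1))
    have hp : 0 < condProb P (B ∩ C) A := by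
      apply div_pos
      · rw [hSet]
        exact ENNReal.toReal_pos hABC.ne' (measure_ne_top P _)
      · exact ENNReal.toReal_pos hPA.ne' (measure_ne_top P _)
    have h := key2 P A B C ω
    rw [iterCond, conjCE, h, hz2, div_self hp.ne']
    by_cases hA : ω ∈ A
    · have h2 : ind Aᶜ ω = 0 := by simp [ind, Set.indicator_apply, hA]
      have h3 : ind (A ∪ A)ᶜ ω = 0 := by simp [ind, Set.indicator_apply, hA]
      rw [condEvent, h2, h3, hSet]
      ring
    · have h2 : ind Aᶜ ω = 1 := by simp [ind, Set.indicator_apply, hA]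
      have h3 : ind (A ∪ A)ᶜ ω = 1 := by simp [ind, Set.indicator_apply, hA]
      have h4 : ind (A ∩ B ∩ C) ω = 0 := by simp [ind, Set.indicator_apply, hA]
      have h5 : ind ((B ∩ C) ∩ A) ω = 0 := by simp [ind, Set.indicator_apply, hA]
      rw [condEvent, h2, h3, h4, h5]
      ring


end
end
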